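/- (Proposition 2 for a fixed set of test points, matrix form: the LU-CBTB is dominated by the CBTB.) Let B ∈ ℝ^{(P+1)×(P+1)} be symmetric positive semidefinite and invertible, let θ_0, …, θ_P ∈ ℝ^M, let W ∈ ℝ^{M×M} be symmetric positive semidefinite, and let U_0, …, U_P ∈ ℝ^{M×(M−K)}. Define T ∈ ℝ^{M×(P+1)} whose m-th column (m = 0,…,P) is θ_m − θ_0 (so the first column is zero), D the block matrix with (m,n) block U_mᵀ W U_n · B_{m,n}, and t the stacked vector with m-th block U_mᵀ W (θ_m − θ_0). If D is invertible, then tᵀ D⁻¹ t ≤ Tr( T B⁻¹ Tᵀ W ). -/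

import Mathlib

open Matrix

/-- **Proposition 2 for a fixed set of test points (matrix form):**
the LU-CBTB is dominated by the CBTB, `tᵀ D⁻¹ t ≤ Tr(T B⁻¹ Tᵀ W)`. -/
theorem lu_cbtb_le_cbtb_fixed_test_points
    (M K P : ℕ) (hK : 0 < K) (hKM : K < M) (hP : 1 ≤ P)
    (B : Matrix (Fin (P + 1)) (Fin (P + 1)) ℝ)
    (hB : B.PosSemidef) (hB_inv : IsUnit B.det)
    (θ : Fin (P + 1) → Fin M → ℝ)
    (W : Matrix (Fin M) (Fin M) ℝ) (hW : W.PosSemidef)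
    (U : Fin (P + 1) → Matrix (Fin M) (Fin (M - K)) ℝ)
    (T : Matrix (Fin M) (Fin (P + 1)) ℝ)
    (hT : ∀ i m, T i m = θ m i - θ 0 i)
    (D : Matrix (Fin (P + 1) × Fin (M - K)) (Fin (P + 1) × Fin (M - K)) ℝ)
    (hD : ∀ m n i j, D (m, i) (n, j) = ((U m)ᵀ * W * U n) i j * B m n)
    (t : Fin (P + 1) × Fin (M - K) → ℝ)
    (ht : ∀ m i, t (m, i) = (U m)ᵀ.mulVec (W.mulVec (fun k => θ m k - θ 0 k)) i)
    (hD_inv : IsUnit D.det) :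
    t ⬝ᵥ D⁻¹.mulVec t ≤ (T * B⁻¹ * Tᵀ * W).trace := by
  classical
  set C := (open scoped MatrixOrder in CFC.sqrt B) with hCdef
  set S := (open scoped MatrixOrder in CFC.sqrt W) with hSdef
  have hCsym : Cᵀ = C := by
    have h := (open scoped MatrixOrder in (CFC.sqrt_nonneg B).posSemidef).isHermitian
    rwa [Matrix.IsHermitian, conjTranspose_eq_transpose_of_trivial] at h
  have hSsym : Sᵀ = S := by
    have h := (open scoped MatrixOrder in (CFC.sqrt_nonneg W).posSemidef).isHermitian
    rwa [Matrix.IsHermitian, conjTranspose_eq_transpose_of_trivial] at h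
  have hCC : C * C = B := open scoped MatrixOrder in CFC.sqrt_mul_sqrt_self B hB.nonneg
  have hSS : S * S = W := open scoped MatrixOrder in CFC.sqrt_mul_sqrt_self W hW.nonneg
  have hCe : ∀ a b, C a b = C b a := fun a b => congrFun (congrFun hCsym.symm a) b
  have hCunit : IsUnit C.det := by
    have h : IsUnit (C.det * C.det) := by
      rw [← Matrix.det_mul, hCC]; exact hB_inv
    exact isUnit_of_mul_isUnit_left h
  have hCinv : C * C⁻¹ = 1 := Matrix.mul_nonsing_inv C hCunit
  have hBinv : B⁻¹ = C⁻¹ * C⁻¹ := by rw [← hCC, Matrix.mul_inv_rev]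
  -- the big "square-root" matrix and the comparison vector
  set X : Matrix (Fin (P + 1) × Fin M) (Fin (P + 1) × Fin (M - K)) ℝ :=
    Matrix.of (fun pk mi => C pk.1 mi.1 * (S * U mi.1) pk.2 mi.2) with hXdef
  set Y : Matrix (Fin (P + 1)) (Fin M) ℝ := C⁻¹ * Tᵀ * S with hYdef
  set y : Fin (P + 1) × Fin M → ℝ := fun pk => Y pk.1 pk.2 with hydef
  have hXapp : ∀ pk mi, X pk mi = C pk.1 mi.1 * (S * U mi.1) pk.2 mi.2 := fun _ _ => rfl
  -- D is the Gram matrix of X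
  have h1 : ∀ m n, (U m)ᵀ * W * U n = (S * U m)ᵀ * (S * U n) := by
    intro m n
    rw [Matrix.transpose_mul, hSsym, Matrix.mul_assoc ((U m)ᵀ) S, ← Matrix.mul_assoc S S,
      hSS, ← Matrix.mul_assoc]
  have hXD : Xᵀ * X = D := by
    ext ⟨m, i⟩ ⟨n, j⟩
    rw [hD m n i j, h1 m n]
    have h2 : B m n = ∑ p, C p m * C p n := by
      rw [← hCC, Matrix.mul_apply]
      exact Finset.sum_congr rfl fun p _ => by rw [hCe m p]
    rw [h2, Matrix.mul_apply (M := Xᵀ) (N := X),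
      Matrix.mul_apply (M := (S * U m)ᵀ) (N := S * U n), Finset.sum_mul_sum,
      Fintype.sum_prod_type, Finset.sum_comm]
    refine Finset.sum_congr rfl fun k _ => Finset.sum_congr rfl fun p _ => ?_
    simp only [Matrix.transpose_apply, hXapp]
    ring
  -- t = Xᵀ y
  have hty : Xᵀ.mulVec y = t := by
    funext pk
    obtain ⟨m, i⟩ := pk
    have hTm : (fun k => θ m k - θ 0 k) = fun k => T k m := by
      funext k; rw [hT k m]
    rw [ht m i, hTm]
    have hRHS : (U m)ᵀ.mulVec (W.mulVec fun k => T k m) i = ((U m)ᵀ * W * T) i m := by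
      rw [Matrix.mulVec_mulVec, Matrix.mulVec, dotProduct, Matrix.mul_apply]
    rw [hRHS]
    have hCY : C * Y = Tᵀ * S := by
      rw [hYdef, ← Matrix.mul_assoc, ← Matrix.mul_assoc, hCinv, Matrix.one_mul]
    have hLHS : Xᵀ.mulVec y (m, i) = ((S * U m)ᵀ * (C * Y)ᵀ) i m := by
      rw [Matrix.mulVec, dotProduct, Fintype.sum_prod_type, Finset.sum_comm,
        Matrix.mul_apply (M := (S * U m)ᵀ) (N := (C * Y)ᵀ)]
      refine Finset.sum_congr rfl fun k _ => ?_
      rw [Matrix.transpose_apply, Matrix.transpose_apply,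
        Matrix.mul_apply (M := C) (N := Y), Finset.mul_sum]
      refine Finset.sum_congr rfl fun p _ => ?_
      simp only [Matrix.transpose_apply, hXapp, hydef, hCe m p]
      ring
    rw [hLHS, hCY]
    have hTS : (Tᵀ * S)ᵀ = S * T := by
      rw [Matrix.transpose_mul, hSsym, Matrix.transpose_transpose]
    rw [hTS]
    have : (U m)ᵀ * W * T = ((S * U m)ᵀ) * (S * T) := by
      rw [Matrix.transpose_mul, hSsym, Matrix.mul_assoc ((U m)ᵀ) S, ← Matrix.mul_assoc S S,
        hSS, ← Matrix.mul_assoc]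
    rw [this]
  -- the projection inequality
  have hDmul : D * D⁻¹ = 1 := Matrix.mul_nonsing_inv D hD_inv
  set z : Fin (P + 1) × Fin (M - K) → ℝ := D⁻¹.mulVec t with hzdef
  have hDz : D.mulVec z = t := by
    rw [hzdef, Matrix.mulVec_mulVec, hDmul, Matrix.one_mulVec]
  have e1 : y ⬝ᵥ X.mulVec z = t ⬝ᵥ z := by
    rw [Matrix.dotProduct_mulVec, ← Matrix.mulVec_transpose, hty]
  have e2 : X.mulVec z ⬝ᵥ X.mulVec z = t ⬝ᵥ z := by
    rw [Matrix.dotProduct_mulVec, ← Matrix.mulVec_transpose, Matrix.mulVec_mulVec, hXD, hDz]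
  set r : Fin (P + 1) × Fin M → ℝ := y - X.mulVec z with hrdef
  have hrr : 0 ≤ r ⬝ᵥ r := Finset.sum_nonneg fun pk _ => mul_self_nonneg _
  have hkey : r ⬝ᵥ r = y ⬝ᵥ y - t ⬝ᵥ z := by
    rw [hrdef, sub_dotProduct, dotProduct_sub, dotProduct_sub,
      e1, e2, dotProduct_comm (X.mulVec z) y, e1]
    ring
  have hle : t ⬝ᵥ z ≤ y ⬝ᵥ y := by linarith
  -- identify y ⬝ᵥ y with the trace
  have htr : y ⬝ᵥ y = (T * B⁻¹ * Tᵀ * W).trace := by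
    have hy1 : y ⬝ᵥ y = (Y * Yᵀ).trace := by
      rw [dotProduct, Fintype.sum_prod_type, Matrix.trace]
      refine Finset.sum_congr rfl fun p _ => ?_
      rw [Matrix.diag, Matrix.mul_apply]
      exact Finset.sum_congr rfl fun k _ => rfl
    have hYt : Yᵀ = S * T * C⁻¹ := by
      rw [hYdef, Matrix.transpose_mul, Matrix.transpose_mul, hSsym,
        Matrix.transpose_transpose, Matrix.transpose_nonsing_inv, hCsym, Matrix.mul_assoc]
    have hYY : Y * Yᵀ = C⁻¹ * (Tᵀ * W * T * C⁻¹) := by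
      rw [hYt, hYdef]
      rw [show C⁻¹ * Tᵀ * S * (S * T * C⁻¹) = C⁻¹ * (Tᵀ * (S * S) * T * C⁻¹) by
        simp only [Matrix.mul_assoc], hSS]
    rw [hy1, hYY, Matrix.trace_mul_comm]
    have : Tᵀ * W * T * C⁻¹ * C⁻¹ = Tᵀ * W * (T * B⁻¹) := by
      rw [hBinv]
      simp only [Matrix.mul_assoc]
    rw [this, Matrix.trace_mul_comm (Tᵀ * W) (T * B⁻¹)]
    congr 1
    simp only [Matrix.mul_assoc]
  calc t ⬝ᵥ D⁻¹.mulVec t = t ⬝ᵥ z := by rw [hzdef]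
    _ ≤ y ⬝ᵥ y := hle
    _ = (T * B⁻¹ * Tᵀ * W).trace := htr
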